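/- Let $1 < p < \infty$, let $\sigma$ and $\omega$ be locally finite Borel measures on $\mathbb{R}^n$, and let $\mathcal{S}$ be a countable collection of cubes such that the $\mathcal{S}$-maximal operators satisfy $M^{\mathcal{S}}_{\sigma} : L^p(\ell^2, \sigma) \to L^p(\ell^2, \sigma)$ and $M^{\mathcal{S}}_{\omega} : L^{p'}(\ell^2, \omega) \to L^{p'}(\ell^2, \omega)$ boundedly. Then $A_p^{\ell^2, \mathrm{local}, \mathcal{S}}(\sigma, \omega) \approx A_{p'}^{\ell^2, \mathrm{local}, \mathcal{S}}(\omega, \sigma)$, with implicit constants depending only on the maximal function bounds. -/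

import Mathlib

open MeasureTheory Set ENNReal
open scoped NNReal

/-- A (half-open, axis-parallel) cube in `ℝⁿ`. -/
def IsCube {n : ℕ} (s : Set (Fin n → ℝ)) : Prop :=
  ∃ (a : Fin n → ℝ) (l : ℝ), 0 < l ∧ s = {x | ∀ i, x i ∈ Set.Ico (a i) (a i + l)}

/-- The maximal operator associated to the collection of cubes `J : ι → Set ℝⁿ`,
relative to the measure `μ` (with the convention `0/0 = 0` of `ENNReal` division). -/
noncomputable def maxS {n : ℕ} {ι : Type} (J : ι → Set (Fin n → ℝ))
    (μ : Measure (Fin n → ℝ)) (f : (Fin n → ℝ) → ℝ≥0∞) (x : Fin n → ℝ) : ℝ≥0∞ :=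
  ⨆ (i : ι) (_ : x ∈ J i), (∫⁻ y in J i, f y ∂μ) / μ (J i)

/-- Vector-valued (ℓ²) boundedness of `maxS` on `L^p(μ)` with constant `B`. -/
def MaxSBounded {n : ℕ} {ι : Type} (J : ι → Set (Fin n → ℝ))
    (μ : Measure (Fin n → ℝ)) (p : ℝ) (B : ℝ≥0∞) : Prop :=
  ∀ g : ℕ → (Fin n → ℝ) → ℝ≥0∞, (∀ k, Measurable (g k)) →
    (∫⁻ x, (∑' k : ℕ, (maxS J μ (g k) x) ^ 2) ^ (p / 2) ∂μ) ^ (1 / p)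
      ≤ B * (∫⁻ x, (∑' k : ℕ, (g k x) ^ 2) ^ (p / 2) ∂μ) ^ (1 / p)

/-- The local quadratic Muckenhoupt characteristic `A_p^{ℓ²,local,𝒮}(σ,ω)`, defined
as the supremum of the ratios in the defining inequality (the "best constant"). -/
noncomputable def AquadS {n : ℕ} {ι : Type} (J : ι → Set (Fin n → ℝ)) (p : ℝ)
    (σ ω : Measure (Fin n → ℝ)) : ℝ≥0∞ :=
  ⨆ a : ι → ℝ≥0,
    (∫⁻ x, (∑' i : ι, ((a i : ℝ≥0∞)) ^ 2 * (σ (J i) / volume (J i)) ^ 2 *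
        (J i).indicator (fun _ => (1 : ℝ≥0∞)) x) ^ (p / 2) ∂ω) ^ (1 / p) /
    (∫⁻ x, (∑' i : ι, ((a i : ℝ≥0∞)) ^ 2 *
        (J i).indicator (fun _ => (1 : ℝ≥0∞)) x) ^ (p / 2) ∂σ) ^ (1 / p)

lemma IsCube.eq_pi {n : ℕ} {s : Set (Fin n → ℝ)} (h : IsCube s) :
    ∃ (a : Fin n → ℝ) (l : ℝ), 0 < l ∧ s = Set.pi univ (fun i => Set.Ico (a i) (a i + l)) := by
  obtain ⟨a, l, hl, rfl⟩ := h
  exact ⟨a, l, hl, by ext x; simp [Set.mem_pi]⟩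

lemma IsCube.measurableSet {n : ℕ} {s : Set (Fin n → ℝ)} (h : IsCube s) :
    MeasurableSet s := by
  obtain ⟨a, l, hl, rfl⟩ := h.eq_pi
  exact MeasurableSet.univ_pi (fun i => measurableSet_Ico)

lemma IsCube.measure_lt_top {n : ℕ} {s : Set (Fin n → ℝ)} (h : IsCube s)
    (μ : Measure (Fin n → ℝ)) [IsLocallyFiniteMeasure μ] : μ s < ∞ := by
  obtain ⟨a, l, hl, rfl⟩ := h.eq_pi
  refine lt_of_le_of_lt (measure_mono (fun x hx => ?_))
    ((isCompact_univ_pi (fun i => isCompact_Icc (a := a i) (b := a i + l))).measure_lt_top)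
  exact fun i _ => Ico_subset_Icc_self (hx i (mem_univ i))

lemma IsCube.volume_pos {n : ℕ} {s : Set (Fin n → ℝ)} (h : IsCube s) :
    0 < volume s := by
  obtain ⟨a, l, hl, rfl⟩ := h.eq_pi
  rw [volume_pi_pi]
  exact CanonicallyOrderedAdd.prod_pos.2
    (fun i _ => by simp [Real.volume_Ico, hl])

lemma tsum_cauchy_schwarz {ι : Type} [Countable ι] (u v : ι → ℝ≥0∞) :
    ∑' i, u i * v i ≤ (∑' i, (u i)^2) ^ ((1:ℝ)/2) * (∑' i, (v i)^2) ^ ((1:ℝ)/2) := by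
  letI : MeasurableSpace ι := ⊤
  haveI : MeasurableSingletonClass ι := ⟨fun _ => trivial⟩
  have hu : AEMeasurable u (Measure.count : Measure ι) := (Measurable.of_discrete).aemeasurable
  have hv : AEMeasurable v (Measure.count : Measure ι) := (Measurable.of_discrete).aemeasurable
  have hc : Real.HolderConjugate 2 2 := Real.holderConjugate_iff.mpr ⟨one_lt_two, by norm_num⟩
  have h := ENNReal.lintegral_mul_le_Lp_mul_Lq (Measure.count : Measure ι) hc hu hv
  simp only [lintegral_count, Pi.mul_apply] at h
  have e : ∀ w : ι → ℝ≥0∞, ∑' i, (w i) ^ (2:ℝ) = ∑' i, (w i)^2 := by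
    intro w
    refine tsum_congr (fun i => ?_)
    rw [← ENNReal.rpow_natCast (w i) 2]
    norm_num
  rwa [e u, e v] at h

lemma maxS_zero {n : ℕ} {ι : Type} (J : ι → Set (Fin n → ℝ)) (μ : Measure (Fin n → ℝ)) :
    maxS J μ 0 = 0 := by
  funext x
  simp [maxS]

lemma le_maxS {n : ℕ} {ι : Type} (J : ι → Set (Fin n → ℝ)) (μ : Measure (Fin n → ℝ))
    (f : (Fin n → ℝ) → ℝ≥0∞) {i : ι} {x : Fin n → ℝ} (hx : x ∈ J i) :
    (∫⁻ y in J i, f y ∂μ) / μ (J i) ≤ maxS J μ f x :=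
  le_iSup_of_le i (le_iSup_of_le hx le_rfl)

lemma vanish {n : ℕ} {ι : Type} [Countable ι] {J : ι → Set (Fin n → ℝ)}
    (hJm : ∀ i, MeasurableSet (J i)) {r : ℝ} (hr : 0 < r) (a : ι → ℝ≥0∞)
    (μ : Measure (Fin n → ℝ))
    (h : ∫⁻ x, (∑' i, a i * (J i).indicator (fun _ => (1:ℝ≥0∞)) x) ^ r ∂μ = 0) :
    ∀ i, a i = 0 ∨ μ (J i) = 0 := by
  intro i
  have hle : ∀ x, (J i).indicator (fun _ => a i ^ r) x
      ≤ (∑' j, a j * (J j).indicator (fun _ => (1:ℝ≥0∞)) x) ^ r := by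
    intro x
    by_cases hx : x ∈ J i
    · rw [indicator_of_mem hx]
      refine ENNReal.rpow_le_rpow ?_ hr.le
      refine le_trans ?_ (ENNReal.le_tsum i)
      simp [indicator_of_mem hx]
    · simp [indicator_of_notMem hx]
  have h2 : (a i ^ r) * μ (J i) = 0 := by
    rw [← lintegral_indicator_const (hJm i)]
    exact le_antisymm (h ▸ lintegral_mono hle) (zero_le)
  rcases mul_eq_zero.1 h2 with h3 | h3
  · rcases ENNReal.rpow_eq_zero_iff.1 h3 with ⟨h4, _⟩ | ⟨_, h4⟩
    · exact Or.inl h4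
    · linarith
  · exact Or.inr h3

/-- Squares of `c • 1_S`. -/
lemma mul_indicator_sq {α : Type*} (c : ℝ≥0∞) (S : Set α) (x : α) :
    (c * S.indicator (fun _ => (1:ℝ≥0∞)) x)^2 = c^2 * S.indicator (fun _ => (1:ℝ≥0∞)) x := by
  by_cases h : x ∈ S <;> simp [h]

lemma core {n : ℕ} {ι : Type} [Countable ι] {J : ι → Set (Fin n → ℝ)}
    (hJ : ∀ i, IsCube (J i)) {p q : ℝ} (hp : 1 < p) (hq : 1 < q)
    (hpq : 1/p + 1/q = 1) {B : ℝ≥0∞} (hB : B < ∞)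
    (σ ω : Measure (Fin n → ℝ)) [IsLocallyFiniteMeasure σ] [IsLocallyFiniteMeasure ω]
    (hM : MaxSBounded J ω q B) (a : ι → ℝ≥0) (s : Finset ι) (ha : ∀ i ∉ s, a i = 0) :
    (∫⁻ x, (∑' i, ((a i : ℝ≥0∞))^2 * (σ (J i) / volume (J i))^2 *
        (J i).indicator (fun _ => (1:ℝ≥0∞)) x)^(p/2) ∂ω)^(1/p)
    ≤ B * AquadS J q ω σ *
      (∫⁻ x, (∑' i, ((a i : ℝ≥0∞))^2 *
        (J i).indicator (fun _ => (1:ℝ≥0∞)) x)^(p/2) ∂σ)^(1/p) := by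
  classical
  have hp0 : (0:ℝ) < p := lt_trans one_pos hp
  have hq0 : (0:ℝ) < q := lt_trans one_pos hq
  have hqp : p + q = p * q := by
    field_simp at hpq
    linarith
  have hpq2 : (p - 1) * q = p := by nlinarith
  have hJm : ∀ i, MeasurableSet (J i) := fun i => (hJ i).measurableSet
  set ind : ι → (Fin n → ℝ) → ℝ≥0∞ := fun i => (J i).indicator (fun _ => (1:ℝ≥0∞))
    with hind
  have hindm : ∀ i, Measurable (ind i) := fun i => measurable_const.indicator (hJm i)
  have hindle : ∀ i x, ind i x ≤ 1 := by
    intro i x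
    by_cases hx : x ∈ J i <;> simp [hind, hx]
  set E : ι → ℝ≥0∞ := fun i => σ (J i) / volume (J i) with hE
  have hEfin : ∀ i, E i ≠ ∞ := fun i =>
    (ENNReal.div_lt_top ((hJ i).measure_lt_top σ).ne ((hJ i).volume_pos).ne').ne
  set G : ι → (Fin n → ℝ) → ℝ≥0∞ := fun i x => (a i : ℝ≥0∞) * E i * ind i x with hG
  have hGm : ∀ i, Measurable (G i) := fun i => (hindm i).const_mul _
  set F2 : (Fin n → ℝ) → ℝ≥0∞ := fun x => ∑' i, (G i x)^2 with hF2
  have hF2m : Measurable F2 := Measurable.ennreal_tsum (fun i => (hGm i).pow_const 2)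
  have hGs : ∀ x, F2 x = ∑ i ∈ s, (G i x)^2 := by
    intro x
    refine tsum_eq_sum (fun i hi => ?_)
    simp [hG, ha i hi]
  have hGfin : ∀ i x, (G i x)^2 ≤ ((a i : ℝ≥0∞) * E i)^2 := by
    intro i x
    refine pow_le_pow_left₀ (zero_le) ?_ 2
    calc G i x ≤ (a i : ℝ≥0∞) * E i * 1 := mul_le_mul_right (hindle i x) _
      _ = (a i : ℝ≥0∞) * E i := mul_one _
  have haEfin : ∀ i, ((a i : ℝ≥0∞) * E i)^2 ≠ ∞ := fun i =>
    pow_ne_top (ENNReal.mul_ne_top ENNReal.coe_ne_top (hEfin i))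
  have hF2fin : ∀ x, F2 x ≠ ∞ := by
    intro x
    rw [hGs x]
    exact (ENNReal.sum_lt_top.2 fun i _ =>
      lt_of_le_of_lt (hGfin i x) (haEfin i).lt_top).ne
  -- identify the numerator integrand with F2
  have hint1 : (∫⁻ x, (∑' i, ((a i : ℝ≥0∞))^2 * (σ (J i) / volume (J i))^2 *
      (J i).indicator (fun _ => (1:ℝ≥0∞)) x)^(p/2) ∂ω) = ∫⁻ x, F2 x ^ (p/2) ∂ω := by
    refine lintegral_congr fun x => ?_
    congr 1
    refine tsum_congr fun i => ?_
    simp only [hG, hE, hind]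
    rw [mul_indicator_sq, mul_pow]
  rw [hint1]
  set Np : ℝ≥0∞ := ∫⁻ x, F2 x ^ (p/2) ∂ω with hNp
  -- finiteness of Np
  have hNpfin : Np ≠ ∞ := by
    set K : ℝ≥0∞ := ∑ i ∈ s, ((a i : ℝ≥0∞) * E i)^2 with hK
    have hKfin : K ≠ ∞ := (ENNReal.sum_lt_top.2 fun i _ => (haEfin i).lt_top).ne
    set U : Set (Fin n → ℝ) := ⋃ i ∈ s, J i with hU
    have hUm : MeasurableSet U := s.measurableSet_biUnion (fun i _ => hJm i)
    have hbound : ∀ x, F2 x ^ (p/2) ≤ U.indicator (fun _ => K ^ (p/2)) x := by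
      intro x
      by_cases hx : x ∈ U
      · rw [indicator_of_mem hx]
        refine ENNReal.rpow_le_rpow ?_ (by positivity)
        rw [hGs x, hK]
        exact Finset.sum_le_sum fun i _ => hGfin i x
      · rw [indicator_of_notMem hx]
        have h0 : F2 x = 0 := by
          rw [hGs x]
          refine Finset.sum_eq_zero fun i hi => ?_
          have hxi : x ∉ J i := fun h => hx (mem_biUnion hi h)
          simp [hG, hind, indicator_of_notMem hxi]
        rw [h0, ENNReal.zero_rpow_of_pos (by positivity)]
    have : Np ≤ K^(p/2) * ω U :=
      (lintegral_mono hbound).trans_eq (lintegral_indicator_const hUm _)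
    refine (lt_of_le_of_lt this (ENNReal.mul_lt_top
      (ENNReal.rpow_lt_top_of_nonneg (by positivity) hKfin) ?_)).ne
    exact lt_of_le_of_lt (measure_biUnion_finset_le s J)
      (ENNReal.sum_lt_top.2 fun i _ => (hJ i).measure_lt_top ω)
  rcases eq_or_ne Np 0 with hNp0 | hNp0
  · rw [hNp0, ENNReal.zero_rpow_of_pos (by positivity)]
    exact zero_le
  -- the dual family b
  set Npq : ℝ≥0∞ := Np ^ (1/q) with hNpq
  have hNpq0 : Npq ≠ 0 := by
    rw [hNpq]
    simp only [ne_eq, ENNReal.rpow_eq_zero_iff, not_or, not_and]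
    constructor
    · intro h; exact absurd h hNp0
    · intro h; exact absurd h hNpfin
  have hNpqfin : Npq ≠ ∞ := (ENNReal.rpow_lt_top_of_nonneg (by positivity) hNpfin).ne
  set b : ι → (Fin n → ℝ) → ℝ≥0∞ := fun i x => G i x * F2 x ^ ((p-2)/2) * Npq⁻¹ with hbdef
  have hb : ∀ i x, b i x = G i x * F2 x ^ ((p-2)/2) * Npq⁻¹ := fun i x => rfl
  have hbm : ∀ i, Measurable (b i) :=
    fun i => ((hGm i).mul (hF2m.pow_const _)).mul_const _
  -- (A) the pairing recovers Np^(1/p)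
  have hGb : ∀ x, ∑' i, G i x * b i x = F2 x ^ (p/2) * Npq⁻¹ := by
    intro x
    have h1 : ∀ i, G i x * b i x = (G i x)^2 * (F2 x ^ ((p-2)/2) * Npq⁻¹) := by
      intro i
      rw [hb]
      ring
    calc ∑' i, G i x * b i x = ∑' i, (G i x)^2 * (F2 x ^ ((p-2)/2) * Npq⁻¹) :=
          tsum_congr h1
      _ = F2 x * (F2 x ^ ((p-2)/2) * Npq⁻¹) := ENNReal.tsum_mul_right
      _ = (F2 x * F2 x ^ ((p-2)/2)) * Npq⁻¹ := by rw [mul_assoc]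
      _ = F2 x ^ (p/2) * Npq⁻¹ := by
          congr 1
          rcases eq_or_ne (F2 x) 0 with h | h
          · rw [h, zero_mul, ENNReal.zero_rpow_of_pos (by positivity)]
          · have h2 : F2 x * F2 x ^ ((p-2)/2) = F2 x ^ (1 + (p-2)/2) := by
              rw [ENNReal.rpow_add _ _ h (hF2fin x), ENNReal.rpow_one]
            rw [h2]
            congr 1
            ring
  have hA : ∑' i, ∫⁻ x, G i x * b i x ∂ω = Np ^ (1/p) := by
    rw [← lintegral_tsum (f := fun i x => G i x * b i x) (fun i => ((hGm i).mul (hbm i)).aemeasurable)]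
    calc ∫⁻ x, ∑' i, G i x * b i x ∂ω = ∫⁻ x, F2 x ^ (p/2) * Npq⁻¹ ∂ω :=
          lintegral_congr hGb
      _ = Np * Npq⁻¹ := by
          rw [lintegral_mul_const _ (hF2m.pow_const _), ← hNp]
      _ = Np ^ (1/p) := by
          have h1 : Np = Np ^ (1/p) * Npq := by
            rw [hNpq, ← ENNReal.rpow_add _ _ hNp0 hNpfin, hpq, ENNReal.rpow_one]
          conv_lhs => rw [h1]
          rw [mul_assoc, ENNReal.mul_inv_cancel hNpq0 hNpqfin, mul_one]
  -- (C) the dual family is normalized in L^q(ℓ², ω)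
  have hNp2q : Npq ^ 2 = Np ^ (2/q) := by
    rw [hNpq, ← ENNReal.rpow_natCast (Np ^ ((1:ℝ)/q)) 2, ← ENNReal.rpow_mul]
    congr 1
    push_cast
    ring
  have hNp2q0 : Np ^ ((2:ℝ)/q) ≠ 0 := by
    simp only [ne_eq, ENNReal.rpow_eq_zero_iff, not_or, not_and]
    exact ⟨fun h => absurd h hNp0, fun h => absurd h hNpfin⟩
  have hNp2qfin : Np ^ ((2:ℝ)/q) ≠ ∞ :=
    (ENNReal.rpow_lt_top_of_nonneg (by positivity) hNpfin).ne
  have hbsq : ∀ x, (∑' i, (b i x)^2) ^ (q/2) = F2 x ^ (p/2) * Np⁻¹ := by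
    intro x
    have e1 : (F2 x ^ ((p-2)/2))^2 = F2 x ^ (p-2) := by
      rw [← ENNReal.rpow_natCast (F2 x ^ ((p-2)/2)) 2, ← ENNReal.rpow_mul]
      congr 1
      push_cast
      ring
    have h1 : ∀ i, (b i x)^2 = (G i x)^2 * (F2 x ^ (p-2) * (Np ^ ((2:ℝ)/q))⁻¹) := by
      intro i
      rw [hb, mul_pow, mul_pow, e1, ← ENNReal.inv_pow, hNp2q]
      ring
    have h2 : ∑' i, (b i x)^2 = (F2 x * F2 x ^ (p-2)) * (Np ^ ((2:ℝ)/q))⁻¹ := by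
      calc ∑' i, (b i x)^2 = ∑' i, (G i x)^2 * (F2 x ^ (p-2) * (Np ^ ((2:ℝ)/q))⁻¹) :=
            tsum_congr h1
        _ = F2 x * (F2 x ^ (p-2) * (Np ^ ((2:ℝ)/q))⁻¹) := ENNReal.tsum_mul_right
        _ = _ := by rw [mul_assoc]
    have h3 : F2 x * F2 x ^ (p-2) = F2 x ^ (p-1) := by
      rcases eq_or_ne (F2 x) 0 with h | h
      · rw [h, zero_mul, ENNReal.zero_rpow_of_pos (by linarith)]
      · have h4 : F2 x ^ ((1:ℝ) + (p-2)) = F2 x ^ (1:ℝ) * F2 x ^ (p-2) :=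
          ENNReal.rpow_add _ _ h (hF2fin x)
        rw [ENNReal.rpow_one] at h4
        rw [← h4]
        congr 1
        ring
    rw [h2, ENNReal.mul_rpow_of_nonneg _ _ (by positivity : (0:ℝ) ≤ q/2)]
    congr 1
    · rw [h3, ← ENNReal.rpow_mul]
      congr 1
      rw [show (p-1) * (q/2) = ((p-1)*q)/2 by ring, hpq2]
    · rw [ENNReal.inv_rpow, ← ENNReal.rpow_mul,
        show ((2:ℝ)/q) * (q/2) = (1:ℝ) by field_simp, ENNReal.rpow_one]
  have hnorm : ∫⁻ x, (∑' i, (b i x)^2) ^ (q/2) ∂ω = 1 := by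
    calc ∫⁻ x, (∑' i, (b i x)^2) ^ (q/2) ∂ω = ∫⁻ x, F2 x ^ (p/2) * Np⁻¹ ∂ω :=
          lintegral_congr hbsq
      _ = Np * Np⁻¹ := by rw [lintegral_mul_const _ (hF2m.pow_const _), ← hNp]
      _ = 1 := ENNReal.mul_inv_cancel hNp0 hNpfin
  -- (D) the averages c i are finite
  set c : ι → ℝ≥0∞ := fun i => (∫⁻ x in J i, b i x ∂ω) / ω (J i) with hcdef
  have hc : ∀ i, c i = (∫⁻ x in J i, b i x ∂ω) / ω (J i) := fun i => rfl
  have hbq_le : ∀ i x, (b i x) ^ (q : ℝ) ≤ (∑' j, (b j x)^2) ^ (q/2) := by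
    intro i x
    have h1 : (b i x) ^ (q : ℝ) = ((b i x)^2) ^ (q/2) := by
      rw [← ENNReal.rpow_natCast (b i x) 2, ← ENNReal.rpow_mul]
      congr 1
      push_cast
      ring
    rw [h1]
    exact ENNReal.rpow_le_rpow (ENNReal.le_tsum i) (by positivity)
  have hintJb : ∀ i, ∫⁻ x in J i, b i x ∂ω ≤ (ω (J i)) ^ (1/p) := by
    intro i
    have hconj : Real.HolderConjugate q p :=
      Real.holderConjugate_iff.mpr ⟨hq, by rw [add_comm] at hpq; simpa [one_div] using hpq⟩
    have hH := ENNReal.lintegral_mul_le_Lp_mul_Lq (ω.restrict (J i)) hconj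
      ((hbm i).aemeasurable) (aemeasurable_const (b := (1:ℝ≥0∞)))
    simp only [Pi.mul_apply, mul_one, ENNReal.one_rpow] at hH
    have h2 : ∫⁻ x in J i, (b i x) ^ (q:ℝ) ∂ω ≤ 1 := by
      calc ∫⁻ x in J i, (b i x) ^ (q:ℝ) ∂ω
          ≤ ∫⁻ x in J i, (∑' j, (b j x)^2) ^ (q/2) ∂ω :=
            lintegral_mono fun x => hbq_le i x
        _ ≤ ∫⁻ x, (∑' j, (b j x)^2) ^ (q/2) ∂ω := setLIntegral_le_lintegral _ _
        _ = 1 := hnorm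
    have h3 : (∫⁻ x in J i, (b i x) ^ (q:ℝ) ∂ω) ^ (1/q) ≤ 1 := by
      calc (∫⁻ x in J i, (b i x) ^ (q:ℝ) ∂ω) ^ (1/q) ≤ (1:ℝ≥0∞) ^ ((1:ℝ)/q) :=
            ENNReal.rpow_le_rpow h2 (by positivity)
        _ = 1 := ENNReal.one_rpow _
    calc ∫⁻ x in J i, b i x ∂ω
        ≤ (∫⁻ x in J i, (b i x) ^ (q:ℝ) ∂ω) ^ (1/q) * (∫⁻ _x in J i, (1:ℝ≥0∞) ∂ω) ^ (1/p) := hH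
      _ ≤ 1 * (ω (J i)) ^ (1/p) := by
          refine mul_le_mul' h3 ?_
          rw [setLIntegral_const, one_mul]
      _ = (ω (J i)) ^ (1/p) := one_mul _
  have hcfin : ∀ i, c i ≠ ∞ := by
    intro i
    rcases eq_or_ne (ω (J i)) 0 with h | h
    · have h1 : ω.restrict (J i) = 0 := Measure.restrict_eq_zero.mpr h
      rw [hc]
      simp [h1, h]
    · rw [hc]
      refine (ENNReal.div_lt_top ?_ h).ne
      exact ((hintJb i).trans_lt
        (ENNReal.rpow_lt_top_of_nonneg (by positivity) ((hJ i).measure_lt_top ω).ne)).ne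
  -- (E) pairing identity: move to the σ side
  set W : ι → (Fin n → ℝ) → ℝ≥0∞ :=
    fun i x => (c i * (ω (J i) / volume (J i))) * ind i x with hWdef
  have hW : ∀ i x, W i x = (c i * (ω (J i) / volume (J i))) * ind i x := fun _ _ => rfl
  have hWm : ∀ i, Measurable (W i) := fun i => (hindm i).const_mul _
  set Uu : ι → (Fin n → ℝ) → ℝ≥0∞ := fun i x => (a i : ℝ≥0∞) * ind i x with hUdef
  have hU : ∀ i x, Uu i x = (a i : ℝ≥0∞) * ind i x := fun _ _ => rfl
  have hUm : ∀ i, Measurable (Uu i) := fun i => (hindm i).const_mul _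
  have hind1 : ∀ i x, x ∈ J i → ind i x = 1 := by
    intro i x hx
    simp [hind, hx]
  have hind0 : ∀ i x, x ∉ J i → ind i x = 0 := by
    intro i x hx
    simp [hind, hx]
  have hpair : ∀ i, ∫⁻ x, G i x * b i x ∂ω = ∫⁻ x, Uu i x * W i x ∂σ := by
    intro i
    have h1 : ∀ x, G i x * b i x = ((a i : ℝ≥0∞) * E i) * (J i).indicator (b i) x := by
      intro x
      by_cases hx : x ∈ J i
      · rw [show G i x = (a i : ℝ≥0∞) * E i * ind i x from rfl, hind1 i x hx,
          indicator_of_mem hx, mul_one]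
      · rw [show G i x = (a i : ℝ≥0∞) * E i * ind i x from rfl, hind0 i x hx,
          indicator_of_notMem hx, mul_zero, zero_mul]
    have h2 : ∫⁻ x, G i x * b i x ∂ω = ((a i : ℝ≥0∞) * E i) * ∫⁻ x in J i, b i x ∂ω := by
      rw [lintegral_congr h1, lintegral_const_mul _ ((hbm i).indicator (hJm i)),
        lintegral_indicator (hJm i)]
    have h3 : ∫⁻ x in J i, b i x ∂ω = c i * ω (J i) := by
      rcases eq_or_ne (ω (J i)) 0 with h | h
      · have h1' : ω.restrict (J i) = 0 := Measure.restrict_eq_zero.mpr h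
        rw [hc, h1']
        simp [h]
      · rw [hc]
        exact (ENNReal.div_mul_cancel h ((hJ i).measure_lt_top ω).ne).symm
    have h5 : ∀ x, Uu i x * W i x
        = (J i).indicator (fun _ => ((a i:ℝ≥0∞)) * (c i * (ω (J i) / volume (J i)))) x := by
      intro x
      by_cases hx : x ∈ J i
      · rw [hU, hW, hind1 i x hx, indicator_of_mem hx]
        ring
      · rw [hU, hW, hind0 i x hx, indicator_of_notMem hx]
        ring
    have h4 : ∫⁻ x, Uu i x * W i x ∂σ
        = ((a i:ℝ≥0∞)) * (c i * (ω (J i) / volume (J i))) * σ (J i) := by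
      rw [lintegral_congr h5, lintegral_indicator_const (hJm i)]
    rw [h2, h3, h4, show E i = σ (J i) / volume (J i) from rfl,
      div_eq_mul_inv (σ (J i)) (volume (J i)), div_eq_mul_inv (ω (J i)) (volume (J i))]
    ring
  -- (F) Cauchy-Schwarz in ℓ² and Hölder in L^p(σ)
  have hHold : ∑' i, ∫⁻ x, Uu i x * W i x ∂σ
      ≤ (∫⁻ x, (∑' i, (Uu i x)^2) ^ (p/2) ∂σ) ^ (1/p)
        * (∫⁻ x, (∑' i, (W i x)^2) ^ (q/2) ∂σ) ^ (1/q) := by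
    rw [← lintegral_tsum (f := fun i x => Uu i x * W i x) (fun i => ((hUm i).mul (hWm i)).aemeasurable)]
    have hconj : Real.HolderConjugate p q := Real.holderConjugate_iff.mpr ⟨hp, by simpa [one_div] using hpq⟩
    have hH2 := ENNReal.lintegral_mul_le_Lp_mul_Lq σ hconj
      (f := fun x => (∑' i, (Uu i x)^2) ^ ((1:ℝ)/2))
      (g := fun x => (∑' i, (W i x)^2) ^ ((1:ℝ)/2))
      ((Measurable.ennreal_tsum (fun i => (hUm i).pow_const 2)).pow_const _).aemeasurable
      ((Measurable.ennreal_tsum (fun i => (hWm i).pow_const 2)).pow_const _).aemeasurable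
    simp only [Pi.mul_apply] at hH2
    calc ∫⁻ x, ∑' i, Uu i x * W i x ∂σ
        ≤ ∫⁻ x, ((∑' i, (Uu i x)^2) ^ ((1:ℝ)/2)) * ((∑' i, (W i x)^2) ^ ((1:ℝ)/2)) ∂σ :=
          lintegral_mono fun x => tsum_cauchy_schwarz _ _
      _ ≤ (∫⁻ x, (((∑' i, (Uu i x)^2) ^ ((1:ℝ)/2)) ^ p) ∂σ)^(1/p)
          * (∫⁻ x, (((∑' i, (W i x)^2) ^ ((1:ℝ)/2)) ^ q) ∂σ)^(1/q) := hH2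
      _ = _ := by
          congr 1
          · congr 1
            refine lintegral_congr fun x => ?_
            rw [← ENNReal.rpow_mul]
            congr 1
            ring
          · congr 1
            refine lintegral_congr fun x => ?_
            rw [← ENNReal.rpow_mul]
            congr 1
            ring
  -- the σ-side quadratic expressions
  set cc : ι → ℝ≥0 := fun i => (c i).toNNReal with hccdef
  have hcc : ∀ i, (cc i : ℝ≥0∞) = c i := fun i => coe_toNNReal (hcfin i)
  have hWsq : ∀ x, (∑' i, (W i x)^2)
      = ∑' i, ((cc i : ℝ≥0∞))^2 * (ω (J i) / volume (J i))^2 * ind i x := by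
    intro x
    refine tsum_congr fun i => ?_
    rw [hW]
    by_cases hx : x ∈ J i
    · rw [hind1 i x hx, mul_one, mul_one, mul_pow, hcc]
    · rw [hind0 i x hx, mul_zero, mul_zero]
      exact zero_pow (by norm_num)
  have hUsq : ∀ x, (∑' i, (Uu i x)^2) = ∑' i, ((a i : ℝ≥0∞))^2 * ind i x := by
    intro x
    refine tsum_congr fun i => ?_
    rw [hU]
    by_cases hx : x ∈ J i
    · rw [hind1 i x hx, mul_one, mul_one]
    · rw [hind0 i x hx, mul_zero, mul_zero]
      exact zero_pow (by norm_num)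
  -- (G) the maximal function bound on the dual side
  obtain ⟨f, hf⟩ := exists_injective_nat ι
  set g : ℕ → (Fin n → ℝ) → ℝ≥0∞ :=
    fun k => if h : ∃ i, f i = k then b h.choose else 0 with hgdef
  have hgf : ∀ i, g (f i) = b i := by
    intro i
    have h : ∃ j, f j = f i := ⟨i, rfl⟩
    have h1 : g (f i) = b h.choose := dif_pos h
    rw [h1, hf h.choose_spec]
  have hgm : ∀ k, Measurable (g k) := by
    intro k
    by_cases h : ∃ i, f i = k
    · rw [show g k = b h.choose from dif_pos h]
      exact hbm _
    · rw [show g k = 0 from dif_neg h]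
      exact measurable_const
  have hg0 : ∀ k, k ∉ Set.range f → g k = 0 := by
    intro k hk
    refine dif_neg ?_
    rintro ⟨i, hi⟩
    exact hk ⟨i, hi⟩
  have htrans : ∀ x, ∑' k : ℕ, (g k x)^2 = ∑' i : ι, (b i x)^2 := by
    intro x
    have h1 : Function.support (fun k => (g k x)^2) ⊆ Set.range f := by
      intro k hk
      by_contra h
      simp only [Function.mem_support] at hk
      rw [hg0 k h] at hk
      simp at hk
    have h2 := Function.Injective.tsum_eq hf (f := fun k => (g k x)^2) h1
    rw [← h2]
    refine tsum_congr fun i => ?_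
    show g (f i) x ^ 2 = b i x ^ 2
    rw [hgf i]
  have hmaxtrans : ∀ x, ∑' k : ℕ, (maxS J ω (g k) x)^2 = ∑' i : ι, (maxS J ω (b i) x)^2 := by
    intro x
    have h1 : Function.support (fun k => (maxS J ω (g k) x)^2) ⊆ Set.range f := by
      intro k hk
      by_contra h
      simp only [Function.mem_support] at hk
      rw [hg0 k h, maxS_zero J ω] at hk
      simp at hk
    have h2 := Function.Injective.tsum_eq hf (f := fun k => (maxS J ω (g k) x)^2) h1
    rw [← h2]
    refine tsum_congr fun i => ?_
    show (maxS J ω (g (f i)) x)^2 = (maxS J ω (b i) x)^2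
    rw [hgf i]
  have hcle : ∀ i x, ((cc i:ℝ≥0∞))^2 * ind i x ≤ (maxS J ω (b i) x)^2 := by
    intro i x
    by_cases hx : x ∈ J i
    · rw [hind1 i x hx, mul_one, hcc]
      refine pow_le_pow_left₀ (zero_le) ?_ 2
      rw [hc]
      exact le_maxS J ω (b i) hx
    · rw [hind0 i x hx, mul_zero]
      exact zero_le
  have hDD : (∫⁻ x, (∑' i, ((cc i:ℝ≥0∞))^2 * ind i x)^(q/2) ∂ω)^(1/q) ≤ B := by
    calc (∫⁻ x, (∑' i, ((cc i:ℝ≥0∞))^2 * ind i x)^(q/2) ∂ω)^(1/q)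
        ≤ (∫⁻ x, (∑' k : ℕ, (maxS J ω (g k) x)^2)^(q/2) ∂ω)^(1/q) := by
          refine ENNReal.rpow_le_rpow (lintegral_mono fun x =>
            ENNReal.rpow_le_rpow ?_ (by positivity)) (by positivity)
          rw [hmaxtrans x]
          exact ENNReal.tsum_le_tsum (fun i => hcle i x)
      _ ≤ B * (∫⁻ x, (∑' k : ℕ, (g k x)^2)^(q/2) ∂ω)^(1/q) := hM g hgm
      _ = B := by
          have h1 : ∫⁻ x, (∑' k : ℕ, (g k x)^2)^(q/2) ∂ω = 1 := by
            rw [← hnorm]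
            exact lintegral_congr fun x => by rw [htrans x]
          rw [h1, ENNReal.one_rpow, mul_one]
  -- conclude via the A_q characteristic
  have hNN : (∫⁻ x, (∑' i, ((cc i:ℝ≥0∞))^2 * (ω (J i) / volume (J i))^2 * ind i x)^(q/2) ∂σ)^(1/q)
      ≤ AquadS J q ω σ * B := by
    rcases eq_or_ne ((∫⁻ x, (∑' i, ((cc i:ℝ≥0∞))^2 * ind i x)^(q/2) ∂ω)^(1/q)) 0 with h0 | h0
    · have hD0 : (∫⁻ x, (∑' i, ((cc i:ℝ≥0∞))^2 * ind i x)^(q/2) ∂ω) = 0 := by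
        rcases ENNReal.rpow_eq_zero_iff.1 h0 with ⟨h1, _⟩ | ⟨_, h1⟩
        · exact h1
        · exfalso
          have : (0:ℝ) < 1/q := by positivity
          linarith
      have hvan := vanish hJm (r := q/2) (by positivity) (fun i => ((cc i:ℝ≥0∞))^2) ω hD0
      have hnum0 : (∫⁻ x, (∑' i, ((cc i:ℝ≥0∞))^2 * (ω (J i) / volume (J i))^2 * ind i x)^(q/2) ∂σ) = 0 := by
        have hz : ∀ x, (∑' i, ((cc i:ℝ≥0∞))^2 * (ω (J i) / volume (J i))^2 * ind i x) = 0 := by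
          intro x
          refine ENNReal.tsum_eq_zero.2 fun i => ?_
          rcases hvan i with h | h
          · rw [show ((cc i:ℝ≥0∞))^2 = 0 from h, zero_mul, zero_mul]
          · rw [h, ENNReal.zero_div]
            simp
        calc (∫⁻ x, (∑' i, ((cc i:ℝ≥0∞))^2 * (ω (J i) / volume (J i))^2 * ind i x)^(q/2) ∂σ)
            = ∫⁻ _x, (0:ℝ≥0∞)^(q/2) ∂σ := lintegral_congr fun x => by rw [hz x]
          _ = 0 := by
              rw [ENNReal.zero_rpow_of_pos (by positivity), lintegral_zero]
      rw [hnum0, ENNReal.zero_rpow_of_pos (by positivity)]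
      exact zero_le
    · have hfin : ((∫⁻ x, (∑' i, ((cc i:ℝ≥0∞))^2 * ind i x)^(q/2) ∂ω)^(1/q)) ≠ ∞ :=
        (lt_of_le_of_lt hDD hB).ne
      have hsup : (∫⁻ x, (∑' i, ((cc i:ℝ≥0∞))^2 * (ω (J i) / volume (J i))^2 * ind i x)^(q/2) ∂σ)^(1/q)
          / ((∫⁻ x, (∑' i, ((cc i:ℝ≥0∞))^2 * ind i x)^(q/2) ∂ω)^(1/q)) ≤ AquadS J q ω σ :=
        le_iSup (fun a' : ι → ℝ≥0 =>
          (∫⁻ x, (∑' i, ((a' i : ℝ≥0∞)) ^ 2 * (ω (J i) / volume (J i)) ^ 2 *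
              (J i).indicator (fun _ => (1 : ℝ≥0∞)) x) ^ (q / 2) ∂σ) ^ (1 / q) /
          (∫⁻ x, (∑' i, ((a' i : ℝ≥0∞)) ^ 2 *
              (J i).indicator (fun _ => (1 : ℝ≥0∞)) x) ^ (q / 2) ∂ω) ^ (1 / q)) cc
      calc (∫⁻ x, (∑' i, ((cc i:ℝ≥0∞))^2 * (ω (J i) / volume (J i))^2 * ind i x)^(q/2) ∂σ)^(1/q)
          = (∫⁻ x, (∑' i, ((cc i:ℝ≥0∞))^2 * (ω (J i) / volume (J i))^2 * ind i x)^(q/2) ∂σ)^(1/q)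
            / ((∫⁻ x, (∑' i, ((cc i:ℝ≥0∞))^2 * ind i x)^(q/2) ∂ω)^(1/q))
            * ((∫⁻ x, (∑' i, ((cc i:ℝ≥0∞))^2 * ind i x)^(q/2) ∂ω)^(1/q)) :=
            (ENNReal.div_mul_cancel h0 hfin).symm
        _ ≤ AquadS J q ω σ * B := mul_le_mul' hsup hDD
  -- final chain
  calc Np ^ (1/p) = ∑' i, ∫⁻ x, G i x * b i x ∂ω := hA.symm
    _ = ∑' i, ∫⁻ x, Uu i x * W i x ∂σ := tsum_congr hpair
    _ ≤ (∫⁻ x, (∑' i, (Uu i x)^2) ^ (p/2) ∂σ) ^ (1/p)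
        * (∫⁻ x, (∑' i, (W i x)^2) ^ (q/2) ∂σ) ^ (1/q) := hHold
    _ = (∫⁻ x, (∑' i, ((a i : ℝ≥0∞))^2 * ind i x) ^ (p/2) ∂σ) ^ (1/p)
        * (∫⁻ x, (∑' i, ((cc i:ℝ≥0∞))^2 * (ω (J i) / volume (J i))^2 * ind i x)^(q/2) ∂σ)^(1/q) := by
        congr 1
        · congr 1
          exact lintegral_congr fun x => by rw [hUsq x]
        · congr 1
          exact lintegral_congr fun x => by rw [hWsq x]
    _ ≤ (∫⁻ x, (∑' i, ((a i : ℝ≥0∞))^2 * ind i x) ^ (p/2) ∂σ) ^ (1/p)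
        * (AquadS J q ω σ * B) := mul_le_mul' le_rfl hNN
    _ = B * AquadS J q ω σ *
        (∫⁻ x, (∑' i, ((a i : ℝ≥0∞))^2 * ind i x) ^ (p/2) ∂σ) ^ (1/p) := by ring

lemma iSup_rpow_seq (g : ℕ → ℝ≥0∞) {r : ℝ} (hr : 0 < r) :
    (⨆ m, g m) ^ r = ⨆ m, (g m) ^ r :=
  Monotone.map_iSup_of_continuousAt (ENNReal.continuous_rpow_const.continuousAt)
    (ENNReal.monotone_rpow_of_nonneg hr.le) (by simp [ENNReal.zero_rpow_of_pos hr])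

lemma tsum_trunc_iSup {ι : Type} [Countable ι] (u : ι → ℝ≥0∞) (f : ι → ℕ) :
    ⨆ m : ℕ, ∑' i, (if f i < m then u i else 0) = ∑' i, u i := by
  apply le_antisymm
  · refine iSup_le fun m => ENNReal.tsum_le_tsum fun i => ?_
    split_ifs
    · exact le_rfl
    · exact zero_le
  · rw [ENNReal.tsum_eq_iSup_sum]
    refine iSup_le fun s => ?_
    refine le_trans ?_ (le_iSup _ (s.sup f + 1))
    calc ∑ i ∈ s, u i = ∑ i ∈ s, (if f i < s.sup f + 1 then u i else 0) :=
          Finset.sum_congr rfl fun i hi => by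
            rw [if_pos (Nat.lt_succ_of_le (Finset.le_sup hi))]
      _ ≤ ∑' i, (if f i < s.sup f + 1 then u i else 0) := ENNReal.sum_le_tsum s

lemma key {n : ℕ} {ι : Type} [Countable ι] {J : ι → Set (Fin n → ℝ)}
    (hJ : ∀ i, IsCube (J i)) {p q : ℝ} (hp : 1 < p) (hq : 1 < q)
    (hpq : 1/p + 1/q = 1) {B : ℝ≥0∞} (hB : B < ∞)
    (σ ω : Measure (Fin n → ℝ)) [IsLocallyFiniteMeasure σ] [IsLocallyFiniteMeasure ω]
    (hM : MaxSBounded J ω q B) :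
    AquadS J p σ ω ≤ B * AquadS J q ω σ := by
  classical
  have hp0 : (0:ℝ) < p := lt_trans one_pos hp
  have hJm : ∀ i, MeasurableSet (J i) := fun i => (hJ i).measurableSet
  refine iSup_le fun a => ?_
  set R := B * AquadS J q ω σ with hR
  set D := (∫⁻ x, (∑' i, ((a i:ℝ≥0∞))^2 *
    (J i).indicator (fun _ => (1:ℝ≥0∞)) x)^(p/2) ∂σ)^(1/p) with hD
  suffices hN : (∫⁻ x, (∑' i, ((a i:ℝ≥0∞))^2 * (σ (J i) / volume (J i))^2 *
      (J i).indicator (fun _ => (1:ℝ≥0∞)) x)^(p/2) ∂ω) ≤ (R * D)^p by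
    have h1 := ENNReal.rpow_le_rpow hN (by positivity : (0:ℝ) ≤ 1/p)
    rw [← ENNReal.rpow_mul, mul_one_div, div_self (ne_of_gt hp0), ENNReal.rpow_one] at h1
    exact ENNReal.div_le_of_le_mul h1
  obtain ⟨f, hf⟩ := exists_injective_nat ι
  have hfin : ∀ m : ℕ, {i | f i < m}.Finite := fun m =>
    Set.Finite.preimage hf.injOn (Set.finite_Iio m)
  set t : ℕ → ι → ℝ≥0 := fun m i => if f i < m then a i else 0 with ht
  set w : ι → (Fin n → ℝ) → ℝ≥0∞ := fun i x => ((a i:ℝ≥0∞))^2 * (σ (J i) / volume (J i))^2 *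
    (J i).indicator (fun _ => (1:ℝ≥0∞)) x with hw
  have hwm : ∀ i, Measurable (w i) :=
    fun i => (measurable_const.indicator (hJm i)).const_mul _
  have htm : ∀ m x, (∑' i, ((t m i:ℝ≥0∞))^2 * (σ (J i) / volume (J i))^2 *
      (J i).indicator (fun _ => (1:ℝ≥0∞)) x)
      = ∑' i, (if f i < m then w i x else 0) := by
    intro m x
    refine tsum_congr fun i => ?_
    simp only [ht, hw]
    split_ifs with h
    · rfl
    · simp
  have hmono : ∀ (v : ι → ℝ≥0∞), Monotone (fun m => ∑' i, (if f i < m then v i else 0)) := by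
    intro v m m' hmm
    refine ENNReal.tsum_le_tsum fun i => ?_
    split_ifs with h1 h2
    · exact le_rfl
    · exact absurd (lt_of_lt_of_le h1 hmm) h2
    · exact zero_le
    · exact le_rfl
  have hswap : (∫⁻ x, (∑' i, ((a i:ℝ≥0∞))^2 * (σ (J i) / volume (J i))^2 *
      (J i).indicator (fun _ => (1:ℝ≥0∞)) x)^(p/2) ∂ω)
      = ⨆ m, ∫⁻ x, (∑' i, (if f i < m then w i x else 0))^(p/2) ∂ω := by
    rw [← lintegral_iSup]
    · refine lintegral_congr fun x => ?_
      have h1 : (∑' i, ((a i:ℝ≥0∞))^2 * (σ (J i) / volume (J i))^2 *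
          (J i).indicator (fun _ => (1:ℝ≥0∞)) x) = ∑' i, w i x := by
        refine tsum_congr fun i => ?_
        rw [hw]
      rw [h1, ← tsum_trunc_iSup (fun i => w i x) f, iSup_rpow_seq _ (by positivity : (0:ℝ) < p/2)]
    · intro m
      refine (Measurable.ennreal_tsum fun i => ?_).pow_const _
      by_cases h : f i < m
      · simpa [h] using hwm i
      · simp [h]
    · intro m m' hmm x
      exact ENNReal.rpow_le_rpow (hmono (fun i => w i x) hmm) (by positivity)
  rw [hswap]
  refine iSup_le fun m => ?_
  have h1 := core hJ hp hq hpq hB σ ω hM (t m) (hfin m).toFinset (fun i hi => by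
    simp only [ht]
    exact if_neg (fun h => hi ((hfin m).mem_toFinset.2 h)))
  have h2 : (∫⁻ x, (∑' i, ((t m i:ℝ≥0∞))^2 *
      (J i).indicator (fun _ => (1:ℝ≥0∞)) x)^(p/2) ∂σ)^(1/p) ≤ D := by
    rw [hD]
    refine ENNReal.rpow_le_rpow (lintegral_mono fun x =>
      ENNReal.rpow_le_rpow (ENNReal.tsum_le_tsum fun i => ?_) (by positivity)) (by positivity)
    refine mul_le_mul' (pow_le_pow_left₀ (zero_le) (ENNReal.coe_le_coe.2 ?_) 2) le_rfl
    simp only [ht]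
    split_ifs
    · exact le_rfl
    · exact zero_le
  have h3 : (∫⁻ x, (∑' i, ((t m i:ℝ≥0∞))^2 * (σ (J i) / volume (J i))^2 *
      (J i).indicator (fun _ => (1:ℝ≥0∞)) x)^(p/2) ∂ω)^(1/p) ≤ R * D := by
    refine h1.trans ?_
    rw [hR]
    exact mul_le_mul' le_rfl h2
  have h4 := ENNReal.rpow_le_rpow h3 hp0.le
  rw [← ENNReal.rpow_mul, one_div, inv_mul_cancel₀ (ne_of_gt hp0), ENNReal.rpow_one] at h4
  calc ∫⁻ x, (∑' i, (if f i < m then w i x else 0))^(p/2) ∂ω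
      = ∫⁻ x, (∑' i, ((t m i:ℝ≥0∞))^2 * (σ (J i) / volume (J i))^2 *
        (J i).indicator (fun _ => (1:ℝ≥0∞)) x)^(p/2) ∂ω :=
        lintegral_congr fun x => by rw [htm m x]
    _ ≤ (R * D)^p := h4

/-- Duality of the quadratic Muckenhoupt conditions: if the `𝒮`-maximal operators are
bounded on `L^p(ℓ²,σ)` and `L^{p'}(ℓ²,ω)` respectively, then
`A_p^{ℓ²,local,𝒮}(σ,ω) ≈ A_{p'}^{ℓ²,local,𝒮}(ω,σ)`, with constants depending only
on `p` and the maximal function bounds. -/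
theorem stmt3 (p p' : ℝ) (hp : 1 < p) (hpp' : 1 / p + 1 / p' = 1)
    (Bσ Bω : ℝ≥0∞) (hBσ : Bσ < ∞) (hBω : Bω < ∞) :
    ∃ C : ℝ≥0∞, 0 < C ∧ C < ∞ ∧
      ∀ (n : ℕ) (ι : Type) (_ : Countable ι) (J : ι → Set (Fin n → ℝ)),
        (∀ i, IsCube (J i)) →
        ∀ (σ ω : Measure (Fin n → ℝ)) [IsLocallyFiniteMeasure σ] [IsLocallyFiniteMeasure ω],
          MaxSBounded J σ p Bσ → MaxSBounded J ω p' Bω →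
          AquadS J p σ ω ≤ C * AquadS J p' ω σ ∧
          AquadS J p' ω σ ≤ C * AquadS J p σ ω := by
  have hp0 : (0:ℝ) < p := lt_trans one_pos hp
  have hp' : 1 < p' := by
    have h1 : 1/p < 1 := by
      rw [div_lt_one hp0]
      exact hp
    have h2 : 0 < 1/p' := by
      have h3 : (0:ℝ) < 1/p := by positivity
      linarith
    have hp'0 : (0:ℝ) < p' := one_div_pos.mp h2
    have h4 : 1/p' < 1 := by
      have h3 : (0:ℝ) < 1/p := by positivity
      linarith
    rw [div_lt_one hp'0] at h4
    exact h4
  refine ⟨max (max Bσ Bω) 1, lt_of_lt_of_le one_pos (le_max_right _ _),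
    max_lt (max_lt hBσ hBω) one_lt_top, ?_⟩
  intro n ι hcount J hJcube σ ω _ _ hMσ hMω
  haveI := hcount
  constructor
  · refine le_trans (key hJcube hp hp' hpp' hBω σ ω hMω) ?_
    exact mul_le_mul' (le_trans (le_max_right Bσ Bω) (le_max_left _ 1)) le_rfl
  · refine le_trans (key hJcube hp' hp (by linarith : 1/p' + 1/p = 1) hBσ ω σ hMσ) ?_
    exact mul_le_mul' (le_trans (le_trans (le_max_left Bσ Bω) (le_max_left _ 1)) le_rfl) le_rfl
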